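/- Let u be a nonnegative integer. The local density at 2 of the ternary form 3·2^{2u+3}·x² − (y² + z² + yz) at n = 1 equals 3/2. -/

import Mathlib

open Finset

/-- Natural-number version of the congruence `C*x^2 ≡ y^2+z^2+y*z+1 (mod M)`. -/
def Qp (C M : ℕ) (p : ℕ × ℕ × ℕ) : Prop :=
  (C * p.1 ^ 2) % M = (p.2.1 ^ 2 + p.2.2 ^ 2 + p.2.1 * p.2.2 + 1) % M

instance (C M : ℕ) : DecidablePred (Qp C M) := fun _ => Nat.decEq _ _

/-- Number of solutions with coordinates in `[0, 2^t)`. -/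
def cnt (C t : ℕ) : ℕ :=
  ((range (2 ^ t) ×ˢ range (2 ^ t) ×ˢ range (2 ^ t)).filter (Qp C (2 ^ t))).card

lemma cnt_one (C : ℕ) (hC : 2 ∣ C) : cnt C 1 = 6 := by
  obtain ⟨D, rfl⟩ := hC
  unfold cnt
  rw [pow_one]
  rw [Finset.filter_congr (q := fun p : ℕ × ℕ × ℕ =>
      (p.2.1 ^ 2 + p.2.2 ^ 2 + p.2.1 * p.2.2 + 1) % 2 = 0)
    (fun p _ => by
      unfold Qp
      rw [show 2 * D * p.1 ^ 2 = 2 * (D * p.1 ^ 2) by ring, Nat.mul_mod_right]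
      exact eq_comm)]
  decide

lemma fiber_count (C m x y z : ℕ) (hC : 2 ∣ C) (hm : 2 ∣ m) (hm0 : 0 < m)
    (hQ : Qp C m (x, y, z)) :
    ((range 2 ×ˢ range 2 ×ˢ range 2).filter
      (fun e : ℕ × ℕ × ℕ =>
        Qp C (2 * m) (x + m * e.1, y + m * e.2.1, z + m * e.2.2))).card = 4 := by
  obtain ⟨D, rfl⟩ := hC
  obtain ⟨m', rfl⟩ := hm
  set C := 2 * D with hCdef
  set m := 2 * m' with hmdef
  set L := C * x ^ 2 with hL
  set R := y ^ 2 + z ^ 2 + y * z + 1 with hR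
  have hQ' : L ≡ R [MOD m] := hQ
  -- Step A: pointwise simplification of the lifted congruence
  have hA : ∀ a b c : ℕ,
      Qp C (2 * m) (x + m * a, y + m * b, z + m * c) ↔
        L ≡ R + m * (z * b + y * c) [MOD 2 * m] := by
    intro a b c
    have expandL : C * (x + m * a) ^ 2 = L + (2 * m) * (C * x * a + D * m * a ^ 2) := by
      rw [hL, hCdef]; ring
    have expandR : (y + m * b) ^ 2 + (z + m * c) ^ 2 + (y + m * b) * (z + m * c) + 1
        = (R + m * (z * b + y * c)) + (2 * m) * (y * b + z * c + m' * (b ^ 2 + c ^ 2 + b * c)) := by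
      rw [hR, hmdef]; ring
    show (C * (x + m * a) ^ 2) % (2 * m) = _ % (2 * m) ↔ _
    rw [expandL, expandR, Nat.add_mul_mod_self_left, Nat.add_mul_mod_self_left]
    exact Iff.rfl
  -- Step B: existence of δ
  obtain ⟨δ, hδ2, hLR⟩ : ∃ δ, δ < 2 ∧ L ≡ R + m * δ [MOD 2 * m] := by
    set l := L % (2 * m) with hl
    set r := R % (2 * m) with hr
    have hl2 : l < 2 * m := Nat.mod_lt _ (by omega)
    have hr2 : r < 2 * m := Nat.mod_lt _ (by omega)
    have hlm : l % m = r % m := by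
      rw [hl, hr, Nat.mod_mod_of_dvd _ (dvd_mul_left m 2), Nat.mod_mod_of_dvd _ (dvd_mul_left m 2)]
      exact hQ'
    have hql : l / m < 2 := Nat.div_lt_of_lt_mul (by omega)
    have hqr : r / m < 2 := Nat.div_lt_of_lt_mul (by omega)
    have hl' := Nat.div_add_mod l m
    have hr' := Nat.div_add_mod r m
    have hcase : l = r ∨ l = r + m ∨ r = l + m := by
      have h0 : l / m = 0 ∨ l / m = 1 := Nat.le_one_iff_eq_zero_or_eq_one.mp (Nat.lt_succ_iff.mp hql)
      have h1 : r / m = 0 ∨ r / m = 1 := Nat.le_one_iff_eq_zero_or_eq_one.mp (Nat.lt_succ_iff.mp hqr)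
      rcases h0 with h | h <;> rcases h1 with h' | h' <;>
        rw [h] at hl' <;> rw [h'] at hr' <;> omega
    have hRm : (R + m) % (2 * m) = (r + m) % (2 * m) := by
      rw [Nat.add_mod, ← hr, Nat.mod_eq_of_lt (show m < 2 * m by omega)]
    rcases hcase with h | h | h
    · refine ⟨0, by omega, ?_⟩
      show L % (2 * m) = (R + m * 0) % (2 * m)
      rw [Nat.mul_zero, Nat.add_zero]
      omega
    · refine ⟨1, by omega, ?_⟩
      show L % (2 * m) = (R + m * 1) % (2 * m)
      rw [Nat.mul_one, hRm, Nat.mod_eq_of_lt (show r + m < 2 * m by omega)]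
      omega
    · refine ⟨1, by omega, ?_⟩
      show L % (2 * m) = (R + m * 1) % (2 * m)
      rw [Nat.mul_one, hRm, h, show l + m + m = l + 2 * m by ring, Nat.add_mod_right,
        Nat.mod_eq_of_lt hl2]
  -- Step C: the condition is a parity condition
  have hB : ∀ b c : ℕ,
      (L ≡ R + m * (z * b + y * c) [MOD 2 * m]) ↔ (z * b + y * c) % 2 = δ := by
    intro b c
    constructor
    · intro h
      have h1 : R + m * δ ≡ R + m * (z * b + y * c) [MOD 2 * m] := hLR.symm.trans h
      have h2 : m * δ ≡ m * (z * b + y * c) [MOD 2 * m] := Nat.ModEq.add_left_cancel' R h1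
      have h2' : (m * δ) % (2 * m) = (m * (z * b + y * c)) % (2 * m) := h2
      rw [show 2 * m = m * 2 by ring, Nat.mul_mod_mul_left, Nat.mul_mod_mul_left] at h2'
      have h4 := Nat.eq_of_mul_eq_mul_left hm0 h2'
      omega
    · intro h
      refine hLR.trans (Nat.ModEq.add_left R ?_)
      show (m * δ) % (2 * m) = (m * (z * b + y * c)) % (2 * m)
      rw [show 2 * m = m * 2 by ring, Nat.mul_mod_mul_left, Nat.mul_mod_mul_left, h,
        Nat.mod_eq_of_lt hδ2]
  -- parity constraint: y and z are not both even
  have hpar : ¬(y % 2 = 0 ∧ z % 2 = 0) := by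
    rintro ⟨hy, hz⟩
    have h2 : L ≡ R [MOD 2] := hQ'.of_dvd ⟨m', hmdef⟩
    have hL2 : L % 2 = 0 := by
      rw [hL, hCdef, show 2 * D * x ^ 2 = 2 * (D * x ^ 2) by ring, Nat.mul_mod_right]
    have hR2 : R % 2 = 0 := by rw [← h2]; exact hL2
    obtain ⟨y', rfl⟩ : 2 ∣ y := ⟨y / 2, by omega⟩
    obtain ⟨z', rfl⟩ : 2 ∣ z := ⟨z / 2, by omega⟩
    have : R = 2 * (2 * y' ^ 2 + 2 * z' ^ 2 + 2 * y' * z') + 1 := by rw [hR]; ring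
    omega
  -- rewrite the filter to a parity predicate and enumerate
  have hmod : ∀ b c : ℕ, (z * b + y * c) % 2 = ((z % 2) * b + (y % 2) * c) % 2 := by
    intro b c
    exact (((Nat.mod_modEq z 2).mul_right b).add ((Nat.mod_modEq y 2).mul_right c)).symm
  rw [Finset.filter_congr (q := fun e : ℕ × ℕ × ℕ =>
      ((z % 2) * e.2.1 + (y % 2) * e.2.2) % 2 = δ)
    (fun e _ => by
      rw [hA e.1 e.2.1 e.2.2, hB e.2.1 e.2.2, hmod e.2.1 e.2.2])]
  have hy2 := Nat.mod_two_eq_zero_or_one y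
  have hz2 := Nat.mod_two_eq_zero_or_one z
  have hδ' : δ = 0 ∨ δ = 1 := by omega
  rcases hy2 with hy | hy <;> rcases hz2 with hz | hz <;> rcases hδ' with h0 | h0 <;>
    simp only [hy, hz, h0] <;>
    first
      | decide
      | exact absurd ⟨hy, hz⟩ hpar

lemma Qp_reduce (C m x y z a b c : ℕ)
    (h : Qp C (2 * m) (x + m * a, y + m * b, z + m * c)) : Qp C m (x, y, z) := by
  have h' : C * (x + m * a) ^ 2 ≡
      (y + m * b) ^ 2 + (z + m * c) ^ 2 + (y + m * b) * (z + m * c) + 1 [MOD m] :=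
    Nat.ModEq.of_mul_left 2 h
  have hx : x + m * a ≡ x [MOD m] := by
    show (x + m * a) % m = x % m
    exact Nat.add_mul_mod_self_left x m a
  have hy : y + m * b ≡ y [MOD m] := by
    show (y + m * b) % m = y % m
    exact Nat.add_mul_mod_self_left y m b
  have hz : z + m * c ≡ z [MOD m] := by
    show (z + m * c) % m = z % m
    exact Nat.add_mul_mod_self_left z m c
  have hL : C * (x + m * a) ^ 2 ≡ C * x ^ 2 [MOD m] := (hx.pow 2).mul_left C
  have hR : (y + m * b) ^ 2 + (z + m * c) ^ 2 + (y + m * b) * (z + m * c) + 1 ≡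
      y ^ 2 + z ^ 2 + y * z + 1 [MOD m] :=
    (((hy.pow 2).add (hz.pow 2)).add (hy.mul hz)).add_right 1
  exact (hL.symm.trans h').trans hR

lemma cnt_succ (C : ℕ) (hC : 2 ∣ C) (t : ℕ) (ht : 1 ≤ t) :
    cnt C (t + 1) = 4 * cnt C t := by
  have hm0 : 0 < 2 ^ t := pow_pos (by norm_num) t
  have hm2 : 2 ∣ 2 ^ t := dvd_pow_self 2 (by omega)
  have hM : (2 : ℕ) ^ (t + 1) = 2 * 2 ^ t := by rw [pow_succ, mul_comm]
  unfold cnt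
  rw [hM]
  set m := 2 ^ t with hm
  -- transfer to (base, digits) pairs
  have step1 : ((range (2 * m) ×ˢ range (2 * m) ×ˢ range (2 * m)).filter (Qp C (2 * m))).card
      = (((range m ×ˢ range m ×ˢ range m) ×ˢ (range 2 ×ˢ range 2 ×ˢ range 2)).filter
          (fun qe : (ℕ × ℕ × ℕ) × ℕ × ℕ × ℕ =>
            Qp C (2 * m) (qe.1.1 + m * qe.2.1, qe.1.2.1 + m * qe.2.2.1,
              qe.1.2.2 + m * qe.2.2.2))).card := by
    apply Finset.card_nbij'
      (i := fun p => ((p.1 % m, p.2.1 % m, p.2.2 % m), (p.1 / m, p.2.1 / m, p.2.2 / m)))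
      (j := fun qe => (qe.1.1 + m * qe.2.1, qe.1.2.1 + m * qe.2.2.1, qe.1.2.2 + m * qe.2.2.2))
    · intro p hp
      rw [Finset.mem_coe] at hp ⊢
      simp only [Finset.mem_filter, Finset.mem_product, Finset.mem_range] at hp ⊢
      obtain ⟨⟨h1, h2, h3⟩, hq⟩ := hp
      refine ⟨⟨⟨Nat.mod_lt _ hm0, Nat.mod_lt _ hm0, Nat.mod_lt _ hm0⟩,
        Nat.div_lt_of_lt_mul (by omega), Nat.div_lt_of_lt_mul (by omega),
        Nat.div_lt_of_lt_mul (by omega)⟩, ?_⟩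
      simpa only [Nat.mod_add_div] using hq
    · intro qe hqe
      rw [Finset.mem_coe] at hqe ⊢
      simp only [Finset.mem_filter, Finset.mem_product, Finset.mem_range] at hqe ⊢
      obtain ⟨⟨⟨h1, h2, h3⟩, h4, h5, h6⟩, hq⟩ := hqe
      have b1 : m * qe.2.1 ≤ m * 1 := Nat.mul_le_mul_left m (by omega)
      have b2 : m * qe.2.2.1 ≤ m * 1 := Nat.mul_le_mul_left m (by omega)
      have b3 : m * qe.2.2.2 ≤ m * 1 := Nat.mul_le_mul_left m (by omega)
      exact ⟨⟨by omega, by omega, by omega⟩, hq⟩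
    · intro p hp
      rw [Finset.mem_coe] at hp
      simp only [Finset.mem_filter, Finset.mem_product, Finset.mem_range] at hp
      simp only [Nat.mod_add_div]
    · intro qe hqe
      rw [Finset.mem_coe] at hqe
      simp only [Finset.mem_filter, Finset.mem_product, Finset.mem_range] at hqe
      obtain ⟨⟨⟨h1, h2, h3⟩, h4, h5, h6⟩, hq⟩ := hqe
      have e1 : ∀ x a : ℕ, x < m → a < 2 → (x + m * a) % m = x ∧ (x + m * a) / m = a := by
        intro x a hx ha
        constructor
        · rw [Nat.add_mul_mod_self_left, Nat.mod_eq_of_lt hx]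
        · rw [Nat.add_mul_div_left _ _ hm0, Nat.div_eq_of_lt hx, Nat.zero_add]
      obtain ⟨e11, e12⟩ := e1 _ _ h1 h4
      obtain ⟨e21, e22⟩ := e1 _ _ h2 h5
      obtain ⟨e31, e32⟩ := e1 _ _ h3 h6
      simp only [e11, e12, e21, e22, e31, e32]
  rw [step1]
  rw [Finset.card_eq_sum_card_fiberwise
    (f := fun qe : (ℕ × ℕ × ℕ) × ℕ × ℕ × ℕ => qe.1)
    (t := (range m ×ˢ range m ×ˢ range m).filter (Qp C m))
    (fun qe hqe => by
      rw [Finset.mem_coe] at hqe ⊢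
      simp only [Finset.mem_filter, Finset.mem_product, Finset.mem_range] at hqe ⊢
      exact ⟨hqe.1.1, Qp_reduce C m _ _ _ _ _ _ hqe.2⟩)]
  have fib : ∀ q ∈ (range m ×ˢ range m ×ˢ range m).filter (Qp C m),
      ((((range m ×ˢ range m ×ˢ range m) ×ˢ (range 2 ×ˢ range 2 ×ˢ range 2)).filter
          (fun qe : (ℕ × ℕ × ℕ) × ℕ × ℕ × ℕ =>
            Qp C (2 * m) (qe.1.1 + m * qe.2.1, qe.1.2.1 + m * qe.2.2.1,
              qe.1.2.2 + m * qe.2.2.2))).filter (fun a => a.1 = q)).card = 4 := by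
    intro q hq
    simp only [Finset.mem_filter, Finset.mem_product, Finset.mem_range] at hq
    obtain ⟨⟨hx, hy, hz⟩, hQ⟩ := hq
    have := fiber_count C m q.1 q.2.1 q.2.2 hC hm2 hm0 (by exact hQ)
    rw [← this]
    apply Finset.card_nbij' (i := fun qe => qe.2) (j := fun e => (q, e))
    · intro qe hqe
      rw [Finset.mem_coe] at hqe ⊢
      simp only [Finset.mem_filter, Finset.mem_product, Finset.mem_range] at hqe ⊢
      obtain ⟨⟨⟨_, h4, h5, h6⟩, hQ'⟩, hfst⟩ := hqe
      subst hfst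
      exact ⟨⟨h4, h5, h6⟩, hQ'⟩
    · intro e he
      rw [Finset.mem_coe] at he ⊢
      simp only [Finset.mem_filter, Finset.mem_product, Finset.mem_range] at he ⊢
      exact ⟨⟨⟨⟨hx, hy, hz⟩, he.1⟩, he.2⟩, trivial⟩
    · intro qe hqe
      rw [Finset.mem_coe] at hqe
      simp only [Finset.mem_filter] at hqe
      rw [← hqe.2]
    · intro e he
      rfl
  rw [Finset.sum_congr rfl fib, Finset.sum_const, smul_eq_mul, mul_comm]

lemma cnt_formula (C : ℕ) (hC : 2 ∣ C) : ∀ t, 1 ≤ t → cnt C t = 3 * 2 ^ (2 * t - 1) := by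
  intro t ht
  induction t, ht using Nat.le_induction with
  | base => rw [cnt_one C hC]; norm_num
  | succ t ht ih =>
    rw [cnt_succ C hC t ht, ih]
    rw [show 2 * (t + 1) - 1 = (2 * t - 1) + 2 by omega, pow_add]
    ring

lemma card_bridge (u t : ℕ) (ht : 1 ≤ t) :
    Nat.card {w : ZMod (2 ^ t) × ZMod (2 ^ t) × ZMod (2 ^ t) //
        3 * (2 : ZMod (2 ^ t)) ^ (2 * u + 3) * w.1 ^ 2
          - (w.2.1 ^ 2 + w.2.2 ^ 2 + w.2.1 * w.2.2) = 1} = cnt (3 * 2 ^ (2 * u + 3)) t := by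
  haveI : NeZero (2 ^ t) := ⟨by positivity⟩
  set M := 2 ^ t with hM
  have hcond : ∀ w : ZMod M × ZMod M × ZMod M,
      (3 * (2 : ZMod M) ^ (2 * u + 3) * w.1 ^ 2
          - (w.2.1 ^ 2 + w.2.2 ^ 2 + w.2.1 * w.2.2) = 1)
        ↔ Qp (3 * 2 ^ (2 * u + 3)) M (w.1.val, w.2.1.val, w.2.2.val) := by
    intro w
    have e1 : 3 * (2 : ZMod M) ^ (2 * u + 3) * w.1 ^ 2
        = ((3 * 2 ^ (2 * u + 3) * w.1.val ^ 2 : ℕ) : ZMod M) := by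
      push_cast [ZMod.natCast_val, ZMod.cast_id]
      ring
    have e2 : (w.2.1 ^ 2 + w.2.2 ^ 2 + w.2.1 * w.2.2) + 1
        = ((w.2.1.val ^ 2 + w.2.2.val ^ 2 + w.2.1.val * w.2.2.val + 1 : ℕ) : ZMod M) := by
      push_cast [ZMod.natCast_val, ZMod.cast_id]
      ring
    rw [sub_eq_iff_eq_add', e1, e2, ZMod.natCast_eq_natCast_iff']
    exact Iff.rfl
  rw [Nat.card_eq_fintype_card, Fintype.card_subtype]
  unfold cnt
  rw [← hM]
  apply Finset.card_nbij'
    (i := fun w : ZMod M × ZMod M × ZMod M => (w.1.val, w.2.1.val, w.2.2.val))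
    (j := fun p : ℕ × ℕ × ℕ => ((p.1 : ZMod M), (p.2.1 : ZMod M), (p.2.2 : ZMod M)))
  · intro w hw
    rw [Finset.mem_coe] at hw ⊢
    simp only [Finset.mem_filter, Finset.mem_univ, true_and] at hw
    simp only [Finset.mem_filter, Finset.mem_product, Finset.mem_range]
    exact ⟨⟨ZMod.val_lt _, ZMod.val_lt _, ZMod.val_lt _⟩, (hcond w).mp hw⟩
  · intro p hp
    rw [Finset.mem_coe] at hp ⊢
    simp only [Finset.mem_filter, Finset.mem_product, Finset.mem_range] at hp
    obtain ⟨⟨h1, h2, h3⟩, hq⟩ := hp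
    simp only [Finset.mem_filter, Finset.mem_univ, true_and]
    refine (hcond ((p.1 : ZMod M), (p.2.1 : ZMod M), (p.2.2 : ZMod M))).mpr ?_
    simpa only [ZMod.val_cast_of_lt h1, ZMod.val_cast_of_lt h2, ZMod.val_cast_of_lt h3] using hq
  · intro w hw
    simp only [ZMod.natCast_val, ZMod.cast_id]
  · intro p hp
    rw [Finset.mem_coe] at hp
    simp only [Finset.mem_filter, Finset.mem_product, Finset.mem_range] at hp
    obtain ⟨⟨h1, h2, h3⟩, _⟩ := hp
    simp only [ZMod.val_cast_of_lt h1, ZMod.val_cast_of_lt h2, ZMod.val_cast_of_lt h3]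

/-- Let `u ≥ 0`. The local density at `2` of the ternary form
`3·2^(2u+3)·x² − (y² + z² + yz)` at `n = 1` equals `3/2`. -/
theorem localDensity_two_anisotropic_at_one (u : ℕ) :
    ∃ T : ℕ, ∀ t ≥ T,
      (Nat.card {w : ZMod (2 ^ t) × ZMod (2 ^ t) × ZMod (2 ^ t) //
          3 * (2 : ZMod (2 ^ t)) ^ (2 * u + 3) * w.1 ^ 2
            - (w.2.1 ^ 2 + w.2.2 ^ 2 + w.2.1 * w.2.2) = 1} : ℚ)
          / (2 : ℚ) ^ (2 * t)
        = 3 / 2 := by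
  refine ⟨1, fun t ht => ?_⟩
  have hC : 2 ∣ 3 * 2 ^ (2 * u + 3) :=
    Dvd.dvd.mul_left (dvd_pow_self 2 (by omega)) 3
  rw [card_bridge u t ht, cnt_formula _ hC t ht]
  have h2t : 2 * t = (2 * t - 1) + 1 := by omega
  push_cast
  rw [h2t, pow_succ]
  have hne : (2 : ℚ) ^ (2 * t - 1) ≠ 0 := by positivity
  field_simp
  ring_nf
  rw [show 1 + (t * 2 - 1) - 1 = t * 2 - 1 by omega]
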